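/- Let Fo > 0, Ste > 0, θ_l, θ_r ∈ ℝ, λ₀ > 0 with erf(λ₀) ≠ 0 and erfc(λ₀) ≠ 0, λ(t) = 2λ₀√(t·Fo), θ_left(t, x) = θ_l·(1 − erf(x/(2√(t·Fo)))/erf(λ₀)), θ_right(t, x) = θ_r·(1 − erfc(x/(2√(t·Fo)))/erfc(λ₀)). Then the Stefan condition ∂_x θ_right(t, λ(t)) − ∂_x θ_left(t, λ(t)) = λ'(t)/(Fo·Ste) holds for every t > 0 if and only if λ₀ satisfies the scalar equation λ₀ − (Ste/√π)·e^{−λ₀²}·(θ_r/erfc(λ₀) + θ_l/erf(λ₀)) = 0. -/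

import Mathlib

/-- The error function `erf x = (2/√π) ∫₀ˣ e^{−s²} ds`. -/
noncomputable def erf (x : ℝ) : ℝ :=
  (2 / Real.sqrt Real.pi) * ∫ s in (0:ℝ)..x, Real.exp (-s ^ 2)

/-- The complementary error function `erfc = 1 - erf`. -/
noncomputable def erfc (x : ℝ) : ℝ := 1 - erf x

/-- Liquid-phase branch of the exact self-similar Stefan solution. -/
noncomputable def thetaLeft (Fo θl lam0 t x : ℝ) : ℝ :=
  θl * (1 - erf (x / (2 * Real.sqrt (t * Fo))) / erf lam0)

/-- Solid-phase branch of the exact self-similar Stefan solution. -/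
noncomputable def thetaRight (Fo θr lam0 t x : ℝ) : ℝ :=
  θr * (1 - erfc (x / (2 * Real.sqrt (t * Fo))) / erfc lam0)

/-- The liquid–solid interface `λ(t) = 2lam0√(t·Fo)`. -/
noncomputable def interface (Fo lam0 t : ℝ) : ℝ := 2 * lam0 * Real.sqrt (t * Fo)

/-- The exact self-similar solution of the two-phase Stefan problem. -/
noncomputable def thetaEx (Fo θl θr lam0 t x : ℝ) : ℝ :=
  if x ≤ interface Fo lam0 t then thetaLeft Fo θl lam0 t x else thetaRight Fo θr lam0 t x

open intervalIntegral in
lemma erf_hasDerivAt (x : ℝ) :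
    HasDerivAt erf (2 / Real.sqrt Real.pi * Real.exp (-x ^ 2)) x := by
  have hc : Continuous fun s : ℝ => Real.exp (-s ^ 2) := by continuity
  have h : HasDerivAt (fun u => ∫ s in (0:ℝ)..u, Real.exp (-s ^ 2)) (Real.exp (-x ^ 2)) x :=
    integral_hasDerivAt_right (hc.intervalIntegrable _ _)
      (hc.stronglyMeasurableAtFilter _ _) hc.continuousAt
  exact h.const_mul (2 / Real.sqrt Real.pi)

lemma erf_comp_hasDerivAt (s x : ℝ) (hs : s ≠ 0) :
    HasDerivAt (fun y => erf (y / (2 * s)))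
      (2 / Real.sqrt Real.pi * Real.exp (-(x / (2 * s)) ^ 2) * (1 / (2 * s))) x := by
  have h1 : HasDerivAt (fun y : ℝ => y / (2 * s)) (1 / (2 * s)) x := by
    simpa using (hasDerivAt_id x).div_const (2 * s)
  have := (erf_hasDerivAt (x / (2 * s))).comp x h1
  exact this

theorem stefan_condition_iff (Fo Ste θl θr lam0 : ℝ) (hFo : 0 < Fo) (hSte : 0 < Ste)
    (hlam0 : 0 < lam0) (herf : erf lam0 ≠ 0) (herfc : erfc lam0 ≠ 0) :
    (∀ t : ℝ, 0 < t →
        deriv (fun y => thetaRight Fo θr lam0 t y) (interface Fo lam0 t) -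
          deriv (fun y => thetaLeft Fo θl lam0 t y) (interface Fo lam0 t) =
        deriv (fun τ => interface Fo lam0 τ) t / (Fo * Ste)) ↔
      lam0 - (Ste / Real.sqrt Real.pi) * Real.exp (-lam0 ^ 2) *
        (θr / erfc lam0 + θl / erf lam0) = 0 := by
  have hπ : Real.sqrt Real.pi ≠ 0 := by positivity
  have key : ∀ t : ℝ, 0 < t →
      ((deriv (fun y => thetaRight Fo θr lam0 t y) (interface Fo lam0 t) -
          deriv (fun y => thetaLeft Fo θl lam0 t y) (interface Fo lam0 t) =
        deriv (fun τ => interface Fo lam0 τ) t / (Fo * Ste)) ↔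
      lam0 - (Ste / Real.sqrt Real.pi) * Real.exp (-lam0 ^ 2) *
        (θr / erfc lam0 + θl / erf lam0) = 0) := by
    intro t ht
    set s := Real.sqrt (t * Fo) with hsdef
    have hs : 0 < s := Real.sqrt_pos.2 (by positivity)
    have hqs : s ^ 2 = t * Fo := Real.sq_sqrt (by positivity)
    have hx : interface Fo lam0 t / (2 * s) = lam0 := by
      field_simp [interface, hsdef]
      rw [interface, hsdef]
      ring
    set D := 2 / Real.sqrt Real.pi * Real.exp (-lam0 ^ 2) * (1 / (2 * s)) with hD
    -- derivative of thetaLeft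
    have hL : deriv (fun y => thetaLeft Fo θl lam0 t y) (interface Fo lam0 t)
        = θl * (-(D / erf lam0)) := by
      have h := erf_comp_hasDerivAt s (interface Fo lam0 t) hs.ne'
      rw [hx] at h
      have h2 : HasDerivAt (fun y => thetaLeft Fo θl lam0 t y)
          (θl * (-(D / erf lam0))) (interface Fo lam0 t) := by
        simpa [thetaLeft, hsdef, hD] using ((h.div_const (erf lam0)).const_sub 1).const_mul θl
      exact h2.deriv
    -- derivative of thetaRight
    have hR : deriv (fun y => thetaRight Fo θr lam0 t y) (interface Fo lam0 t)
        = θr * (D / erfc lam0) := by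
      have h := erf_comp_hasDerivAt s (interface Fo lam0 t) hs.ne'
      rw [hx] at h
      have h3 : HasDerivAt (fun y => erfc (y / (2 * s))) (-D) (interface Fo lam0 t) := by
        simpa [erfc, hD] using h.const_sub 1
      have h2 : HasDerivAt (fun y => thetaRight Fo θr lam0 t y)
          (θr * (D / erfc lam0)) (interface Fo lam0 t) := by
        have := ((h3.div_const (erfc lam0)).const_sub 1).const_mul θr
        simpa [thetaRight, hsdef, neg_div] using this
      exact h2.deriv
    -- derivative of interface
    have hI : deriv (fun τ => interface Fo lam0 τ) t = 2 * lam0 * (1 / (2 * s) * Fo) := by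
      have h1 : HasDerivAt (fun τ : ℝ => τ * Fo) Fo t := by
        simpa using (hasDerivAt_id t).mul_const Fo
      have h2 : HasDerivAt (fun τ : ℝ => Real.sqrt (τ * Fo)) (1 / (2 * s) * Fo) t :=
        (Real.hasDerivAt_sqrt (by positivity)).comp t h1
      exact (h2.const_mul (2 * lam0)).deriv
    rw [hL, hR, hI]
    rw [← sub_eq_zero]
    have hfac : θr * (D / erfc lam0) - θl * (-(D / erf lam0)) -
        2 * lam0 * (1 / (2 * s) * Fo) / (Fo * Ste) =
        (lam0 - (Ste / Real.sqrt Real.pi) * Real.exp (-lam0 ^ 2) *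
          (θr / erfc lam0 + θl / erf lam0)) * (-(1 / (Ste * s))) := by
      rw [hD]
      field_simp
      ring
    have hne : -(1 / (Ste * s)) ≠ 0 := by
      simp only [ne_eq, neg_eq_zero, one_div, inv_eq_zero]
      positivity
    rw [hfac, mul_eq_zero, or_iff_left hne]
  constructor
  · intro h
    exact (key 1 one_pos).1 (h 1 one_pos)
  · intro h t ht
    exact (key t ht).2 h
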